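/- For all integers i ≥ 1, all positive integers j that are odd, not divisible by 3, and not a power of 2, and all n ≥ 0, the number of overpartition (3^i·j)-tuples with odd parts satisfies OPT̄_{3^i·j}(3n+1) ≡ 0 (mod 3^i·2). -/

import Mathlib

/-- The number of overpartitions of `n` into odd parts: a partition of `n` into odd
parts together with a choice of which distinct part values are overlined. -/
def overpartitionOddCount (n : ℕ) : ℕ :=
  ∑ p ∈ Nat.Partition.odds n, 2 ^ p.parts.toFinset.card

/-- The number of overpartition `k`-tuples of `n` with odd parts. -/
def overpartitionOddTuples (k n : ℕ) : ℕ :=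
  ∑ c ∈ Finset.Nat.antidiagonalTuple k n, ∏ i, overpartitionOddCount (c i)

open Finset

/-- Each overpartition count with positive `n` is even. -/
lemma two_dvd_overpartitionOddCount {m : ℕ} (hm : 0 < m) : 2 ∣ overpartitionOddCount m := by
  refine Finset.dvd_sum fun p _ => ?_
  have hne : p.parts ≠ 0 := by
    intro h
    have := p.parts_sum
    rw [h] at this
    simp at this
    omega
  have hcard : 0 < p.parts.toFinset.card := by
    rw [Finset.card_pos]
    obtain ⟨a, ha⟩ := Multiset.exists_mem_of_ne_zero hne
    exact ⟨a, Multiset.mem_toFinset.2 ha⟩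
  exact dvd_pow_self 2 hcard.ne'

/-- For positive `n`, the tuple count is even. -/
lemma two_dvd_overpartitionOddTuples (k : ℕ) {N : ℕ} (hN : 0 < N) :
    2 ∣ overpartitionOddTuples k N := by
  refine Finset.dvd_sum fun c hc => ?_
  rw [Finset.Nat.mem_antidiagonalTuple] at hc
  have : ∃ l, 0 < c l := by
    by_contra h
    push_neg at h
    have : ∑ l, c l = 0 := Finset.sum_eq_zero fun l _ => Nat.le_zero.mp (h l)
    omega
  obtain ⟨l, hl⟩ := this
  exact Dvd.dvd.trans (two_dvd_overpartitionOddCount hl)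
    (Finset.dvd_prod_of_mem _ (Finset.mem_univ l))

/-- Convolution identity. -/
lemma overpartitionOddTuples_add (a b N : ℕ) :
    overpartitionOddTuples (a + b) N =
      ∑ p ∈ Finset.HasAntidiagonal.antidiagonal N,
        overpartitionOddTuples a p.1 * overpartitionOddTuples b p.2 := by
  classical
  unfold overpartitionOddTuples
  have step : ∀ p ∈ Finset.HasAntidiagonal.antidiagonal N,
      (∑ c ∈ Finset.Nat.antidiagonalTuple a p.1, ∏ l, overpartitionOddCount (c l)) *
        (∑ d ∈ Finset.Nat.antidiagonalTuple b p.2, ∏ l, overpartitionOddCount (d l)) =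
      ∑ cd ∈ (Finset.Nat.antidiagonalTuple a p.1) ×ˢ (Finset.Nat.antidiagonalTuple b p.2),
        (∏ l, overpartitionOddCount (cd.1 l)) * (∏ l, overpartitionOddCount (cd.2 l)) := by
    intro p _
    rw [Finset.sum_mul_sum, Finset.sum_product]
  rw [Finset.sum_congr rfl step, Finset.sum_sigma']
  refine Finset.sum_nbij'
    (i := fun c => (⟨(∑ l, c (Fin.castAdd b l), ∑ l, c (Fin.natAdd a l)),
      (fun l => c (Fin.castAdd b l), fun l => c (Fin.natAdd a l))⟩ :
      Σ _p : ℕ × ℕ, (Fin a → ℕ) × (Fin b → ℕ)))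
    (j := fun x => Fin.append x.2.1 x.2.2) ?_ ?_ ?_ ?_ ?_
  · intro c hc
    rw [Finset.Nat.mem_antidiagonalTuple] at hc
    simp only [Finset.mem_sigma, Finset.mem_product, Finset.HasAntidiagonal.mem_antidiagonal,
      Finset.Nat.mem_antidiagonalTuple]
    refine ⟨by rw [← hc, Fin.sum_univ_add], ?_, ?_⟩ <;> trivial
  · intro x hx
    simp only [Finset.mem_sigma, Finset.mem_product, Finset.HasAntidiagonal.mem_antidiagonal,
      Finset.Nat.mem_antidiagonalTuple] at hx
    rw [Finset.Nat.mem_antidiagonalTuple, Fin.sum_univ_add]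
    simp only [Fin.append_left, Fin.append_right]
    rw [hx.2.1, hx.2.2, hx.1]
  · intro c _
    exact Fin.append_castAdd_natAdd
  · intro x hx
    obtain ⟨⟨pa, pb⟩, c, d⟩ := x
    simp only [Finset.mem_sigma, Finset.mem_product, Finset.HasAntidiagonal.mem_antidiagonal,
      Finset.Nat.mem_antidiagonalTuple] at hx
    have hc : (fun l => Fin.append c d (Fin.castAdd b l)) = c :=
      funext fun l => Fin.append_left c d l
    have hd : (fun l => Fin.append c d (Fin.natAdd a l)) = d :=
      funext fun l => Fin.append_right c d l
    simp only [hc, hd, hx.2.1, hx.2.2]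
  · intro c _
    rw [Fin.prod_univ_add]

/-- The set of ordered triples summing to `N`. -/
def triSet (N : ℕ) : Finset (ℕ × ℕ × ℕ) :=
  (Finset.range (N + 1) ×ˢ Finset.range (N + 1) ×ˢ Finset.range (N + 1)).filter
    (fun t => t.1 + t.2.1 + t.2.2 = N)

lemma mem_triSet {N : ℕ} {t : ℕ × ℕ × ℕ} : t ∈ triSet N ↔ t.1 + t.2.1 + t.2.2 = N := by
  simp only [triSet, Finset.mem_filter, Finset.mem_product, Finset.mem_range]
  constructor
  · exact fun h => h.2
  · intro h; exact ⟨⟨by omega, by omega, by omega⟩, h⟩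

/-- Triple convolution. -/
lemma overpartitionOddTuples_three_mul (k N : ℕ) :
    overpartitionOddTuples (3 * k) N =
      ∑ t ∈ triSet N, overpartitionOddTuples k t.1 *
        (overpartitionOddTuples k t.2.1 * overpartitionOddTuples k t.2.2) := by
  classical
  have h3 : 3 * k = k + (k + k) := by ring
  rw [h3, overpartitionOddTuples_add]
  have step : ∀ p ∈ Finset.HasAntidiagonal.antidiagonal N,
      overpartitionOddTuples k p.1 * overpartitionOddTuples (k + k) p.2 =
      ∑ q ∈ Finset.HasAntidiagonal.antidiagonal p.2, overpartitionOddTuples k p.1 *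
        (overpartitionOddTuples k q.1 * overpartitionOddTuples k q.2) := by
    intro p _
    rw [overpartitionOddTuples_add, Finset.mul_sum]
  rw [Finset.sum_congr rfl step, Finset.sum_sigma']
  refine Finset.sum_nbij' (i := fun x => (x.1.1, x.2.1, x.2.2))
    (j := fun t => (⟨(t.1, t.2.1 + t.2.2), (t.2.1, t.2.2)⟩ : Σ _p : ℕ × ℕ, ℕ × ℕ))
    ?_ ?_ ?_ ?_ ?_
  · intro x hx
    simp only [Finset.mem_sigma, Finset.HasAntidiagonal.mem_antidiagonal] at hx
    rw [mem_triSet]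
    simp only
    omega
  · intro t ht
    rw [mem_triSet] at ht
    simp only [Finset.mem_sigma, Finset.HasAntidiagonal.mem_antidiagonal]
    refine ⟨by omega, ?_⟩
    trivial
  · intro x hx
    obtain ⟨⟨pa, s⟩, b, c⟩ := x
    simp only [Finset.mem_sigma, Finset.HasAntidiagonal.mem_antidiagonal] at hx
    have : s = b + c := hx.2.symm
    subst this
    rfl
  · intro t _
    rfl
  · intro x _
    rfl

/-- Orbit lemma: if `g` acts on `s` with `g³ = id`, no fixed points, and `w` invariant,
then `3 ∣ ∑ w`. -/
lemma three_dvd_sum_of_rotation {α : Type*} [DecidableEq α] (s : Finset α) (g : α → α)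
    (w : α → ℕ) (hmaps : ∀ x ∈ s, g x ∈ s) (h3 : ∀ x ∈ s, g (g (g x)) = x)
    (hfree : ∀ x ∈ s, g x ≠ x) (hw : ∀ x ∈ s, w (g x) = w x) :
    3 ∣ ∑ x ∈ s, w x := by
  revert hmaps h3 hfree hw
  induction s using Finset.strongInduction with
  | _ s ih =>
    intro hmaps h3 hfree hw
    rcases s.eq_empty_or_nonempty with rfl | ⟨x, hx⟩
    · simp
    · have hgx : g x ∈ s := hmaps x hx
      have hggx : g (g x) ∈ s := hmaps _ hgx
      have h1 : g x ≠ x := hfree x hx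
      have h2 : g (g x) ≠ g x := hfree _ hgx
      have h3x : g (g (g x)) = x := h3 x hx
      have h4 : g (g x) ≠ x := by
        intro h
        have hgg := congrArg g h
        rw [h3x] at hgg
        exact h1 hgg.symm
      set o : Finset α := {x, g x, g (g x)} with ho
      have hos : o ⊆ s := by
        intro y hy
        simp only [ho, Finset.mem_insert, Finset.mem_singleton] at hy
        rcases hy with rfl | rfl | rfl <;> assumption
      have hsum : ∑ y ∈ o, w y = 3 * w x := by
        rw [ho, Finset.sum_insert (by simp [h1.symm, h4.symm]),
          Finset.sum_insert (by simp [h2.symm]), Finset.sum_singleton,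
          hw x hx, hw _ hgx, hw x hx]
        ring
      set s' := s \ o with hs'
      have hginj : ∀ y ∈ s, ∀ z ∈ s, g y = g z → y = z := by
        intro y hy z hz h
        have h1' := h3 y hy
        rw [h] at h1'
        rw [← h1', h3 z hz]
      have hgo : ∀ y ∈ s, (g y ∈ o ↔ y ∈ o) := by
        intro y hy
        simp only [ho, Finset.mem_insert, Finset.mem_singleton]
        constructor
        · rintro (h | h | h)
          · right; right
            exact hginj y hy _ hggx (by rw [h, h3x])
          · left; exact hginj y hy x hx h
          · right; left; exact hginj y hy _ hgx h
        · rintro (rfl | rfl | rfl)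
          · right; left; rfl
          · right; right; rfl
          · left; exact h3x
      have key : ∑ y ∈ s, w y = ∑ y ∈ o, w y + ∑ y ∈ s', w y := by
        rw [hs', eq_comm, Nat.add_comm, Finset.sum_sdiff hos]
      rw [key, hsum]
      have hss' : s' ⊂ s := by
        rw [hs']
        refine Finset.sdiff_ssubset ?_ ?_
        · exact hos
        · exact ⟨x, by simp [ho]⟩
      have := ih s' hss'
        (fun y hy => by
          rw [hs', Finset.mem_sdiff] at hy ⊢
          exact ⟨hmaps y hy.1, fun h => hy.2 ((hgo y hy.1).1 h)⟩)
        (fun y hy => h3 y (Finset.mem_sdiff.mp hy).1)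
        (fun y hy => hfree y (Finset.mem_sdiff.mp hy).1)
        (fun y hy => hw y (Finset.mem_sdiff.mp hy).1)
      omega

/-- The main divisibility: for `3 ∤ N`, `3^i ∣ OT(3^i * j, N)`. -/
lemma pow_three_dvd_overpartitionOddTuples (j : ℕ) :
    ∀ i N : ℕ, ¬ (3 ∣ N) → 3 ^ i ∣ overpartitionOddTuples (3 ^ i * j) N := by
  intro i
  induction i with
  | zero => intro N _; simp
  | succ i ih =>
    intro N hN
    have hk : 3 ^ (i + 1) * j = 3 * (3 ^ i * j) := by ring
    rw [hk, overpartitionOddTuples_three_mul]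
    set T : ℕ → ℕ := overpartitionOddTuples (3 ^ i * j) with hT
    set w : ℕ × ℕ × ℕ → ℕ := fun t => T t.1 * (T t.2.1 * T t.2.2) with hwdef
    have hterm : ∀ t ∈ triSet N, 3 ^ i ∣ w t := by
      intro t ht
      rw [mem_triSet] at ht
      have : ¬ 3 ∣ t.1 ∨ ¬ 3 ∣ t.2.1 ∨ ¬ 3 ∣ t.2.2 := by
        by_contra h
        push_neg at h
        exact hN (ht ▸ Nat.dvd_add (Nat.dvd_add h.1 h.2.1) h.2.2)
      rcases this with h | h | h
      · exact Dvd.dvd.mul_right (ih _ h) _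
      · exact Dvd.dvd.mul_left (Dvd.dvd.mul_right (ih _ h) _) _
      · exact Dvd.dvd.mul_left (Dvd.dvd.mul_left (ih _ h) _) _
    have hsum : ∑ t ∈ triSet N, w t = 3 ^ i * ∑ t ∈ triSet N, w t / 3 ^ i := by
      rw [Finset.mul_sum]
      exact Finset.sum_congr rfl fun t ht => (Nat.mul_div_cancel' (hterm t ht)).symm
    rw [hsum]
    have h3 : 3 ∣ ∑ t ∈ triSet N, w t / 3 ^ i := by
      refine three_dvd_sum_of_rotation (triSet N) (fun t => (t.2.1, t.2.2, t.1)) _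
        ?_ ?_ ?_ ?_
      · intro t ht
        rw [mem_triSet] at ht ⊢
        simp only
        omega
      · intro t _
        rfl
      · intro t ht h
        rw [mem_triSet] at ht
        have h1' : t.2.1 = t.1 := congrArg Prod.fst h
        have h2' : t.2.2 = t.2.1 := congrArg (fun z => z.2.1) h
        exact hN (by omega)
      · intro t _
        have : w (t.2.1, t.2.2, t.1) = w t := by
          simp only [hwdef]
          ring
        rw [this]
    obtain ⟨m, hm⟩ := h3
    rw [hm]
    exact ⟨m, by ring⟩

theorem overpartitionOddTuples_odd_three_n_one (i j n : ℕ) (hi : 1 ≤ i) (hj : 0 < j)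
    (hjodd : Odd j) (hj3 : ¬ (3 ∣ j)) (hjpow : ¬ ∃ m : ℕ, j = 2 ^ m) :
    overpartitionOddTuples (3 ^ i * j) (3 * n + 1) ≡ 0 [MOD 3 ^ i * 2] := by
  have hN3 : ¬ (3 ∣ 3 * n + 1) := by omega
  have h1 : 3 ^ i ∣ overpartitionOddTuples (3 ^ i * j) (3 * n + 1) :=
    pow_three_dvd_overpartitionOddTuples j i _ hN3
  have h2 : 2 ∣ overpartitionOddTuples (3 ^ i * j) (3 * n + 1) :=
    two_dvd_overpartitionOddTuples _ (by omega)
  have hcop : Nat.Coprime (3 ^ i) 2 := Nat.Coprime.pow_left i (by decide)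
  have := Nat.Coprime.mul_dvd_of_dvd_of_dvd hcop h1 h2
  exact (Nat.modEq_zero_iff_dvd).2 this
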